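/- Truth-table reducibility by Mealy machines is closed under intersection of the reduced language with regular languages: for languages L₁ ⊆ Σ* and L₂ ⊆ Δ* over finite nonempty alphabets, if L₁ ≤^A L₂ and R ⊆ Σ* is a regular language, then (L₁ ∩ R) ≤^A L₂. -/

import Mathlib

/-- A Mealy machine with oracle: finite state set `Q`, start state `q0`,
partial transition function `step`, output function `out`, and for each state `q`
a tuple of `numSuf q` query suffixes `suf q` together with a truth table `tt q`. -/
structure OracleMealy (α : Type) (β : Type) where
  Q : Type
  [fintypeQ : Fintype Q]
  q0 : Q
  step : Q → α → Option Q
  out : Q → α → List β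
  numSuf : Q → ℕ
  suf : (q : Q) → Fin (numSuf q) → List β
  tt : (q : Q) → (Fin (numSuf q) → Bool) → Bool

namespace OracleMealy

variable {α β : Type}

/-- Running the machine on input `w` from the start state, returning the final state
together with the string written on the oracle tape (`none` if a transition is undefined). -/
def run (M : OracleMealy α β) (w : List α) : Option (M.Q × List β) :=
  w.foldl
    (fun s a => s.bind fun qo => (M.step qo.1 a).map fun q' => (q', qo.2 ++ M.out qo.1 a))
    (some (M.q0, []))

open Classical in
/-- The machine `M` with oracle `L` accepts `w` iff the run on `w` is defined, ending in a
state `p` with output `o`, and the truth table of `p` applied to the answers of the oracle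
queries `o ++ M.suf p i ∈ L` yields `true`. -/
def Accepts (M : OracleMealy α β) (L : Set (List β)) (w : List α) : Prop :=
  ∃ p o, M.run w = some (p, o) ∧
    M.tt p (fun i => decide (o ++ M.suf p i ∈ L)) = true

end OracleMealy

/-- `L₁ ≤^A L₂`: truth-table reducibility by Mealy machines. -/
def MealyTTReducible (L₁ : Set (List α)) (L₂ : Set (List β)) : Prop :=
  ∃ M : OracleMealy α β, ∀ w : List α, w ∈ L₁ ↔ M.Accepts L₂ w

/-- The language `L_# = {0^n 1^n | n ≥ 1}` over the alphabet `{0,1}` (`false` = 0, `true` = 1). -/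
def Lsharp : Set (List Bool) :=
  {w | ∃ n : ℕ, 1 ≤ n ∧ w = List.replicate n false ++ List.replicate n true}

/-- Truth-table reducibility by Mealy machines is closed under intersection of the reduced
language with a regular language. -/
theorem mealyTTReducible_inter_regular
    {σ Δ : Type} [Fintype σ] [Nonempty σ] [Fintype Δ] [Nonempty Δ]
    (L₁ : Set (List σ)) (L₂ : Set (List Δ)) (R : Set (List σ))
    (h : MealyTTReducible L₁ L₂) (hR : Language.IsRegular (R : Language σ)) :
    MealyTTReducible (L₁ ∩ R) L₂ := by
  obtain ⟨M, hM⟩ := h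
  obtain ⟨T, fT, D, hD⟩ := hR
  haveI := M.fintypeQ
  haveI := fT
  classical
  let M' : OracleMealy σ Δ :=
    { Q := M.Q × T, q0 := (M.q0, D.start),
      step := fun q a => (M.step q.1 a).map fun p => (p, D.step q.2 a),
      out := fun q a => M.out q.1 a,
      numSuf := fun q => M.numSuf q.1,
      suf := fun q => M.suf q.1,
      tt := fun q v => M.tt q.1 v && decide (q.2 ∈ D.accept) }
  refine ⟨M', fun w => ?_⟩
  have key : ∀ w : List σ,
      M'.run w = (M.run w).map (fun po => ((po.1, D.eval w), po.2)) := by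
    intro w
    induction w using List.reverseRecOn with
    | nil => simp [OracleMealy.run, DFA.eval, DFA.evalFrom, M']
    | append_singleton w a ih =>
      simp only [OracleMealy.run, List.foldl_append, List.foldl_cons, List.foldl_nil] at ih ⊢
      rw [ih]
      cases hrw : (List.foldl
        (fun s a => s.bind fun qo => (M.step qo.1 a).map fun q' => (q', qo.2 ++ M.out qo.1 a))
        (some (M.q0, [])) w) with
      | none => simp
      | some po =>
        cases hstep : M.step po.1 a with
        | none => simp [M', hstep]
        | some p' => simp [M', hstep, DFA.eval_append_singleton]
  constructor
  · rintro ⟨h1, h2⟩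
    obtain ⟨p, o, hrun, htt⟩ := (hM w).1 h1
    refine ⟨(p, D.eval w), o, ?_, ?_⟩
    · rw [key w, hrun]; rfl
    · have : D.eval w ∈ D.accept := by
        rw [← DFA.mem_accepts, hD]; exact h2
      simp [M', htt, this]
  · rintro ⟨p, o, hrun, htt⟩
    rw [key w] at hrun
    cases hrun' : M.run w with
    | none => rw [hrun'] at hrun; simp at hrun
    | some po =>
      rw [hrun'] at hrun
      simp only [Option.map_some, Option.some.injEq, Prod.mk.injEq] at hrun
      obtain ⟨rfl, rfl⟩ := hrun
      simp only [M', Bool.and_eq_true, decide_eq_true_eq] at htt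
      refine ⟨(hM w).2 ⟨po.1, po.2, by simpa using hrun', htt.1⟩, ?_⟩
      rw [← hD]; exact (DFA.mem_accepts (M := D) (x := w)).2 htt.2
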